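/- arXiv:1712.02872 — 9 statements merged into one kernel-verified Lean document; each statement's English description precedes it below -/
import Mathlib

section
/- If the active and dormant failure times of the spare coincide (B_a = B_d), then the warm spare gate WSP(A, B_a, B_d) equals the hot spare gate HSP(A, B_a) = max(A, B_a). -/
noncomputable def dAND (A B : EReal) : EReal := max A B
noncomputable def dOR (A B : EReal) : EReal := min A B
noncomputable def dBEFORE (A B : EReal) : EReal := if A < B then A else ⊤
noncomputable def dIBEFORE (A B : EReal) : EReal := if A ≤ B then A else ⊤
noncomputable def dSIMULT (A B : EReal) : EReal := if A = B then A else ⊤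
noncomputable def NEVER : EReal := ⊤

noncomputable def WSP (A Ba Bd : EReal) : EReal :=
  dOR (dOR (dOR (dAND A (dBEFORE Bd A)) (dAND Ba (dBEFORE A Ba))) (dSIMULT A Ba)) (dSIMULT A Bd)

noncomputable def HSP (A B : EReal) : EReal := max A B

theorem wsp_eq_hsp (A Ba Bd : EReal) (h : Ba = Bd) : WSP A Ba Bd = HSP A Ba := by
  subst h
  unfold WSP HSP dOR dAND dBEFORE dSIMULT
  rcases lt_trichotomy A Ba with hlt | heq | hgt
  · simp [hlt, not_lt.mpr hlt.le, hlt.ne, max_eq_right hlt.le, min_eq_right hlt.le, hlt.le]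
  · subst heq
    simp
  · simp [hgt, not_lt.mpr hgt.le, hgt.ne', max_eq_left hgt.le, min_eq_left hgt.le]
end

section
/- For all extended-real failure times A, B, C: A ◁ (B ◁ C) = (A ◁ B) + (A·B·(C ⊴ B)). -/
theorem before_before (A B C : EReal) :
    dBEFORE A (dBEFORE B C) = dOR (dBEFORE A B) (dAND (dAND A B) (dIBEFORE C B)) := by
  simp only [dBEFORE, dOR, dAND, dIBEFORE]
  rcases le_or_gt C B with h3 | h3 <;>
  rcases lt_trichotomy A B with h2 | h2 | h2 <;>
  rcases (le_top : A ≤ ⊤).lt_or_eq with h4 | h4 <;>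
  rcases lt_trichotomy B C with h | h | h <;>
  simp_all [min_def, max_def, le_of_lt, not_le_of_gt, not_lt_of_ge, lt_irrefl] <;>
  first
  | exact absurd (h3.trans_lt h) (lt_irrefl _)
  | exact absurd (h.trans_le h3) (lt_irrefl _)
  | exact absurd (h2.trans h) (lt_irrefl _)
  | simp [not_le_of_gt (h.trans h2)]
end

section
/- For all extended-real failure times A, B, C: (A ◁ B) ◁ C = (A ◁ B)·(A ◁ C). -/
theorem before_before_left (A B C : EReal) :
    dBEFORE (dBEFORE A B) C = dAND (dBEFORE A B) (dBEFORE A C) := by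
  unfold dBEFORE dAND
  split_ifs <;> simp_all
end

section
/- For all extended-real failure times A, B, C: A ◁ (B·C) = (A ◁ B) + (A ◁ C), i.e., Before distributes over AND (max) as OR (min). -/
theorem before_and (A B C : EReal) :
    dBEFORE A (dAND B C) = dOR (dBEFORE A B) (dBEFORE A C) := by
  simp only [dBEFORE, dAND, dOR, lt_max_iff]
  rcases lt_or_ge A B with h1 | h1 <;> rcases lt_or_ge A C with h2 | h2 <;>
    simp [h1, h2, h1.not_gt, h2.not_gt, le_of_lt, min_eq_left, min_eq_right]
end

section
/- For all extended-real failure times A, B, C: A ◁ (B Δ C) = A·(B ◁ C) + A·(C ◁ B) + (A ◁ B) + (A ◁ C). -/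
theorem before_simult (A B C : EReal) :
    dBEFORE A (dSIMULT B C) =
      dOR (dOR (dOR (dAND A (dBEFORE B C)) (dAND A (dBEFORE C B))) (dBEFORE A B)) (dBEFORE A C) := by
  simp only [dAND, dOR, dBEFORE, dSIMULT]
  rcases lt_trichotomy B C with h | h | h
  · simp only [h, h.ne, if_true, if_false, h.not_gt, if_neg, lt_asymm h, max_top_right,
      min_top_left, min_top_right]
    rcases eq_or_lt_of_le (le_top : A ≤ ⊤) with hA | hA
    · simp [hA]
    · rw [if_pos hA]
      by_cases hAB : A < B
      · rw [max_eq_right hAB.le, if_pos hAB, if_pos (hAB.trans h)]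
        simp [min_eq_right, hAB.le, le_refl]
      · rw [max_eq_left (le_of_not_gt hAB), if_neg hAB]
        by_cases hAC : A < C
        · simp [hAC, min_eq_left, hAC.le]
        · simp [hAC]
  · subst h
    simp
  · simp only [h.ne', if_false, h, if_true, h.not_gt, max_top_right, min_top_left, min_top_right]
    rcases eq_or_lt_of_le (le_top : A ≤ ⊤) with hA | hA
    · simp [hA]
    · rw [if_pos hA]
      by_cases hAC : A < C
      · rw [max_eq_right hAC.le, if_pos hAC, if_pos (hAC.trans h)]
        simp [min_eq_right, hAC.le, le_refl, min_comm]
      · rw [max_eq_left (le_of_not_gt hAC), if_neg hAC]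
        by_cases hAB : A < B
        · simp [hAB, min_eq_left, hAB.le]
        · simp [hAB]
end

section
/- Absorption with Before: for all extended-real failure times A, B: A + (A ◁ B) = A and A·(A ◁ B) = A ◁ B. -/
theorem absorb_before (A B : EReal) :
    dOR A (dBEFORE A B) = A ∧ dAND A (dBEFORE A B) = dBEFORE A B := by
  unfold dOR dAND dBEFORE
  split <;> constructor <;> simp_all [min_eq_left, max_eq_right, le_of_lt, le_top]
end

section
/- For all extended-real failure times A, B, C: A ⊴ (B ⊴ C) = (A ◁ B) + (A·B·(C ◁ B)) + ((A Δ B)·(B ⊴ C)). -/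
theorem ibefore_ibefore (A B C : EReal) :
    dIBEFORE A (dIBEFORE B C) =
      dOR (dOR (dBEFORE A B) (dAND (dAND A B) (dBEFORE C B)))
        (dAND (dSIMULT A B) (dIBEFORE B C)) := by
  simp only [dAND, dOR, dBEFORE, dIBEFORE, dSIMULT]
  split_ifs <;>
    simp_all <;>
    first
      | exact absurd (le_antisymm ‹A ≤ B› ‹B ≤ A›) ‹¬A = B›
      | exact absurd ‹A < B› (asymm ‹B < A›)
      | exact absurd ‹C < B› (not_lt.mpr ‹B ≤ C›)
      | exact le_of_lt ‹C < B›
      | exact le_trans (le_of_lt ‹C < B›) ‹B ≤ A›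
      | exact le_trans ‹A ≤ B› ‹B ≤ C›
end

section
/- For all extended-real failure times A, B, C: A Δ (B + C) = (A Δ B)·(B ⊴ C) + (A Δ C)·(C ⊴ B). -/
theorem simult_or (A B C : EReal) :
    dSIMULT A (dOR B C) =
      dOR (dAND (dSIMULT A B) (dIBEFORE B C)) (dAND (dSIMULT A C) (dIBEFORE C B)) := by
  unfold dSIMULT dOR dAND dIBEFORE
  rcases lt_trichotomy B C with h | rfl | h
  · rw [min_eq_left h.le, if_pos h.le, if_neg (not_le.2 h)]
    rcases eq_or_ne A B with rfl | hab
    · rw [if_pos rfl, max_self, if_neg h.ne,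
        min_eq_left (by simp [le_top] : A ≤ max ⊤ ⊤)]
    · simp [hab, fun habc : A = C => hab]
  · simp only [min_self, le_refl, if_true]
    split_ifs with hab
    · subst hab; simp
    · simp
  · rw [min_eq_right h.le, if_pos h.le, if_neg (not_le.2 h)]
    rcases eq_or_ne A C with rfl | hac
    · rw [if_pos rfl, max_self, if_neg h.ne,
        min_eq_right (by simp [le_top] : A ≤ max ⊤ ⊤)]
    · simp [hac]
end

section
/- For all extended-real failure times A, B, C: A Δ (B·C) = (A Δ B)·(C ⊴ B) + (A Δ C)·(B ⊴ C). -/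
theorem simult_and (A B C : EReal) :
    dSIMULT A (dAND B C) =
      dOR (dAND (dSIMULT A B) (dIBEFORE C B)) (dAND (dSIMULT A C) (dIBEFORE B C)) := by
  simp only [dSIMULT, dAND, dOR, dIBEFORE]
  rcases le_total B C with h | h <;>
    simp [max_eq_right, max_eq_left, h] <;>
    split_ifs <;>
    simp_all [le_antisymm h, min_def, max_def]
end
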